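/- Let p ∈ A be m-adequate for some integer m ≥ 1, with the linear coefficient r ∈ R nonzero when m > 1, and let b = ∏_{k=0}^{m−1} p_k. If F ∈ A satisfies TF = F, then b divides F(x,z) − F(x,0) in A; moreover, writing F(x,z) − F(x,0) = b·V(x,z), the quotient V satisfies TV = V and d(V) < d(F) whenever d(F) ≥ 1. -/

import Mathlib

open Polynomial

section GVDAux
open Finset

theorem gvd_main {K : Type*} [Field K] {n : ℕ}
    (p : Polynomial (MvPolynomial (Fin n) K))
    (m : ℕ) (hm : 1 ≤ m)
    (q : K) (r : MvPolynomial (Fin n) K)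
    (hp : p = C (MvPolynomial.C q) * X + C r)
    (hq0 : q ≠ 0)
    (hqm : q ^ m = 1)
    (hsum : r * MvPolynomial.C (∑ i ∈ Finset.range m, q ^ i) = 0)
    (hinj : ∀ j < m, ∀ k < m,
      MvPolynomial.C ((q⁻¹) ^ j) * (r * MvPolynomial.C (∑ i ∈ Finset.range j, q ^ i))
        = MvPolynomial.C ((q⁻¹) ^ k) * (r * MvPolynomial.C (∑ i ∈ Finset.range k, q ^ i)) → j = k)
    (b : Polynomial (MvPolynomial (Fin n) K))
    (hb : b = ∏ k ∈ Finset.range m, (⇑(Polynomial.aeval p))^[k] X)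
    (F : Polynomial (MvPolynomial (Fin n) K))
    (hF : Polynomial.aeval p F = F) :
    (b ∣ F - C (F.coeff 0)) ∧
      ∀ V : Polynomial (MvPolynomial (Fin n) K),
        F - C (F.coeff 0) = b * V →
          Polynomial.aeval p V = V ∧ (1 ≤ F.natDegree → V.natDegree < F.natDegree) := by
  set G : Polynomial (MvPolynomial (Fin n) K) := F - C (F.coeff 0) with hG
  set P : ℕ → Polynomial (MvPolynomial (Fin n) K) := fun k => (⇑(Polynomial.aeval p))^[k] X with hP
  set c : ℕ → MvPolynomial (Fin n) K :=
    fun k => r * MvPolynomial.C (∑ i ∈ Finset.range k, q ^ i) with hc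
  set e : ℕ → MvPolynomial (Fin n) K := fun k => MvPolynomial.C ((q⁻¹) ^ k) * c k with he
  -- structure of the iterates
  have hPk : ∀ k, P k = C (MvPolynomial.C (q ^ k)) * X + C (c k) := by
    intro k
    induction k with
    | zero => simp [hP, hc]
    | succ k ih =>
      have : P (k + 1) = Polynomial.aeval p (P k) := Function.iterate_succ_apply' _ k X
      rw [this, ih]
      simp only [map_add, map_mul, aeval_C, aeval_X, algebraMap_eq, hp, hc,
        Finset.sum_range_succ]
      push_cast
      ring_nf
      simp [map_add, map_mul, pow_succ]
      ring
  have hPm : P m = X := by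
    rw [hPk m, hqm]
    have : c m = 0 := hsum
    simp [this]
  -- units
  have hqk0 : ∀ k : ℕ, (q : K) ^ k ≠ 0 := fun k => pow_ne_zero k hq0
  have haunit : ∀ k : ℕ, IsUnit (C (MvPolynomial.C (q ^ k)) :
      Polynomial (MvPolynomial (Fin n) K)) := by
    intro k
    refine IsUnit.of_mul_eq_one (C (MvPolynomial.C ((q⁻¹) ^ k))) ?_
    rw [← C_mul, ← MvPolynomial.C_mul, ← mul_pow, mul_inv_cancel₀ hq0, one_pow]
    simp
  -- the factored form
  have hfact : ∀ k, P k = C (MvPolynomial.C (q ^ k)) * (X + C (e k)) := by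
    intro k
    rw [hPk k, mul_add, ← C_mul, he]
    congr 2
    rw [← mul_assoc, ← MvPolynomial.C_mul, ← mul_pow, mul_inv_cancel₀ hq0, one_pow]
    simp
  have hprime : ∀ k, Prime (P k) := by
    intro k
    rw [hfact k]
    have h1 : Prime (X + C (e k)) := by
      have := Polynomial.prime_X_sub_C (-(e k))
      simpa [sub_neg_eq_add] using this
    obtain ⟨u, hu⟩ := haunit k
    rw [← hu]
    exact (Associated.prime (⟨u, mul_comm _ _⟩ : Associated (X + C (e k)) _) h1)
  have hPne : ∀ k, P k ≠ 0 := fun k => (hprime k).ne_zero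
  have hPdeg : ∀ k, (P k).natDegree = 1 := by
    intro k
    rw [hPk k]
    exact natDegree_linear (by
      simp only [ne_eq, MvPolynomial.C_eq_zero]
      exact hqk0 k)
  -- distinctness
  have hnd : ∀ j < m, ∀ k < m, j ≠ k → ¬ P j ∣ P k := by
    intro j hj k hk hjk hdvd
    have hd2 : (X + C (e j)) ∣ (X + C (e k)) := by
      obtain ⟨u, hu⟩ := haunit j
      have : (X + C (e j)) ∣ P j := Dvd.intro_left _ (by rw [hfact j])
      refine (this.trans hdvd).trans ?_
      have hx : X + C (e k) = C (MvPolynomial.C ((q⁻¹) ^ k)) * P k := by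
        rw [hfact k, ← mul_assoc, ← C_mul, ← MvPolynomial.C_mul, ← mul_pow,
          inv_mul_cancel₀ hq0, one_pow]
        simp
      exact ⟨_, hx.trans (mul_comm _ _)⟩
    have hme : e j = e k := by
      by_contra hne
      have hd3 : (X + C (e j)) ∣ C (e k - e j) := by
        have : C (e k - e j) = (X + C (e k)) - (X + C (e j)) := by ring_nf; rw [C_sub]
        rw [this]
        exact dvd_sub hd2 dvd_rfl
      have hne0 : C (e k - e j) ≠ 0 := by
        simp only [ne_eq, C_eq_zero, sub_eq_zero]
        exact fun h => hne h.symm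
      have := natDegree_le_of_dvd hd3 hne0
      simp only [natDegree_C] at this
      have : (X + C (e j)).natDegree = 1 := by
        simpa [sub_neg_eq_add] using natDegree_X_sub_C (-(e j))
      omega
    exact hjk (hinj j hj k hk hme)
  -- each P k divides G
  have hTG : Polynomial.aeval p G = G := by
    rw [hG, map_sub, hF, aeval_C, algebraMap_eq]
  have hdvdG : ∀ k, P k ∣ G := by
    intro k
    induction k with
    | zero =>
      simp only [hP, Function.iterate_zero, id_eq]
      rw [X_dvd_iff]
      simp [hG]
    | succ k ih =>
      obtain ⟨H, hH⟩ := ih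
      have : P (k + 1) = Polynomial.aeval p (P k) := Function.iterate_succ_apply' _ k X
      rw [this, ← hTG, hH, map_mul]
      exact Dvd.intro _ rfl
  -- the product divides G
  have hproddvd : ∀ j ≤ m, (∏ k ∈ Finset.range j, P k) ∣ G := by
    intro j hj
    induction j with
    | zero => simp
    | succ j ih =>
      have hj' : j ≤ m := Nat.le_of_succ_le hj
      obtain ⟨H, hH⟩ := ih hj'
      have hdj : P j ∣ (∏ k ∈ Finset.range j, P k) * H := hH ▸ hdvdG j
      have hnotdvd : ¬ P j ∣ ∏ k ∈ Finset.range j, P k := by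
        rw [(hprime j).dvd_finset_prod_iff]
        rintro ⟨k, hk, hdk⟩
        rw [Finset.mem_range] at hk
        exact hnd j (by omega) k (by omega) (by omega) hdk
      have hdH : P j ∣ H := by
        rcases (hprime j).dvd_or_dvd hdj with h | h
        · exact absurd h hnotdvd
        · exact h
      obtain ⟨H', hH'⟩ := hdH
      rw [Finset.prod_range_succ]
      exact ⟨H', by rw [hH, hH', mul_assoc]⟩
  have hbdvd : b ∣ G := hb ▸ hproddvd m le_rfl
  refine ⟨hbdvd, ?_⟩
  -- b is invariant
  have hTb : Polynomial.aeval p b = b := by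
    rw [hb, map_prod]
    have h1 : ∀ k, Polynomial.aeval p (P k) = P (k + 1) := fun k =>
      (Function.iterate_succ_apply' _ k X).symm
    calc ∏ k ∈ Finset.range m, Polynomial.aeval p (P k)
        = ∏ k ∈ Finset.range m, P (k + 1) := by
          exact Finset.prod_congr rfl fun k _ => h1 k
      _ = ∏ k ∈ Finset.range m, P k := by
          have h2 := Finset.prod_range_succ' P m
          have h3 := Finset.prod_range_succ P m
          rw [h3] at h2
          have hP0 : P 0 = X := by simp [hP]
          rw [hP0, hPm] at h2
          exact mul_right_cancel₀ X_ne_zero h2.symm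
  have hbne : b ≠ 0 := by
    rw [hb]
    exact Finset.prod_ne_zero_iff.mpr fun k _ => hPne k
  have hbdeg : b.natDegree = m := by
    rw [hb, natDegree_prod _ _ fun k _ => hPne k]
    simp [hPdeg]
  intro V hV
  constructor
  · -- V invariant
    have := hTG
    rw [hV, map_mul, hTb] at this
    exact mul_left_cancel₀ hbne this
  · intro hdF
    have hGdeg : G.natDegree = F.natDegree := natDegree_sub_C
    have hGne : G ≠ 0 := by
      intro h
      rw [h] at hGdeg
      simp at hGdeg
      omega
    have hVne : V ≠ 0 := by
      intro h
      rw [h, mul_zero] at hV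
      exact hGne hV
    have : G.natDegree = b.natDegree + V.natDegree := by
      rw [hV]
      exact natDegree_mul hbne hVne
    omega

end GVDAux

/-- If `p` is `m`-adequate (`m ≥ 1`, with `r ≠ 0` when `m > 1`) and
`b = ∏_{k<m} p_k`, then for every `T`-invariant `F` the polynomial `b`
divides `F(x,z) - F(x,0)`; moreover any quotient `V` with
`F(x,z) - F(x,0) = b·V` is again `T`-invariant and has `d(V) < d(F)`
whenever `d(F) ≥ 1`. -/
theorem granville_variation_descent
    {K : Type*} [Field K] {n : ℕ} (hn : 1 ≤ n)
    (p : Polynomial (MvPolynomial (Fin n) K))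
    (m : ℕ) (hm : 1 ≤ m)
    (hadeq : (m = 1 ∧ p = X) ∨
      (1 < m ∧ ∃ (q : K) (r : MvPolynomial (Fin n) K),
        IsPrimitiveRoot q m ∧ r ≠ 0 ∧ p = C (MvPolynomial.C q) * X + C r))
    (b : Polynomial (MvPolynomial (Fin n) K))
    (hb : b = ∏ k ∈ Finset.range m, (⇑(Polynomial.aeval p))^[k] X)
    (F : Polynomial (MvPolynomial (Fin n) K))
    (hF : Polynomial.aeval p F = F) :
    (b ∣ F - C (F.coeff 0)) ∧
      ∀ V : Polynomial (MvPolynomial (Fin n) K),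
        F - C (F.coeff 0) = b * V →
          Polynomial.aeval p V = V ∧ (1 ≤ F.natDegree → V.natDegree < F.natDegree) := by
  rcases hadeq with ⟨hm1, hpX⟩ | ⟨hm1, q, r, hprim, hr, hp⟩
  · refine gvd_main p m hm 1 0 ?_ one_ne_zero (one_pow m) (by simp) ?_ b hb F hF
    · simp [hpX]
    · intro j hj k hk _
      omega
  · have hq0 : q ≠ 0 := by
      intro h
      have := hprim.pow_eq_one
      rw [h] at this
      simp [zero_pow (by omega : m ≠ 0)] at this
    have hq1 : q ≠ 1 := by
      intro h
      have h2 : m ∣ 1 := hprim.dvd_of_pow_eq_one 1 (by rw [h, one_pow])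
      have := Nat.le_of_dvd one_pos h2
      omega
    refine gvd_main p m hm q r hp hq0 hprim.pow_eq_one ?_ ?_ b hb F hF
    · rw [hprim.geom_sum_eq_zero hm1]
      simp
    · intro j hj k hk h
      have h2 : r * MvPolynomial.C ((q⁻¹) ^ j * ∑ i ∈ Finset.range j, q ^ i)
          = r * MvPolynomial.C ((q⁻¹) ^ k * ∑ i ∈ Finset.range k, q ^ i) := by
        rw [MvPolynomial.C_mul, MvPolynomial.C_mul]
        ring_nf
        ring_nf at h
        linear_combination h
      have h3 : (q⁻¹) ^ j * ∑ i ∈ Finset.range j, q ^ i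
          = (q⁻¹) ^ k * ∑ i ∈ Finset.range k, q ^ i :=
        MvPolynomial.C_injective _ _ (mul_left_cancel₀ hr h2)
      have key : ∀ l : ℕ, (q⁻¹) ^ l * (∑ i ∈ Finset.range l, q ^ i) * (q - 1)
          = 1 - (q⁻¹) ^ l := by
        intro l
        rw [mul_assoc, geom_sum_mul, mul_sub, mul_one, inv_pow,
          inv_mul_cancel₀ (pow_ne_zero l hq0)]
      have h4 : (1 : K) - (q⁻¹) ^ j = 1 - (q⁻¹) ^ k := by
        rw [← key j, ← key k, h3]
      have h5 : (q⁻¹) ^ j = (q⁻¹) ^ k := by linear_combination -h4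
      have h6 : q ^ j = q ^ k := by
        have := congrArg (·⁻¹) h5
        simpa [← inv_pow] using this
      exact hprim.pow_inj hj hk h6
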